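/- The series ∑_{r=2}^∞ L(1/r²) converges and equals π²/6, where L is the Rogers L-function. -/

import Mathlib

open Real MeasureTheory intervalIntegral Set Filter Topology

noncomputable def Li2 (x : ℝ) : ℝ := -∫ t in (0:ℝ)..x, Real.log (1 - t) / t

noncomputable def hfun (t : ℝ) : ℝ := if t = 0 then -1 else Real.log (1 - t) / t

lemma hfun_contAt {t : ℝ} (ht : t < 1) : ContinuousAt hfun t := by
  rcases eq_or_ne t 0 with rfl | ht0
  · -- continuity at 0 via derivative of log(1-·)
    have hd : HasDerivAt (fun s : ℝ => Real.log (1 - s)) (-1) 0 := by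
      have h1 : HasDerivAt (fun s : ℝ => 1 - s) (-1) 0 := by
        simpa using (hasDerivAt_id (0:ℝ)).const_sub 1
      simpa using h1.log (by norm_num)
    have hslope := hasDerivAt_iff_tendsto_slope.mp hd
    have hEq : ∀ s : ℝ, s ≠ 0 → slope (fun s : ℝ => Real.log (1 - s)) 0 s = hfun s := by
      intro s hs
      simp [slope_def_field, hfun, hs, div_eq_div_iff]
    have h2 : Tendsto hfun (𝓝[≠] (0:ℝ)) (𝓝 (-1)) := by
      refine hslope.congr' ?_
      filter_upwards [self_mem_nhdsWithin] with s hs using hEq s hs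
    have : Tendsto hfun (𝓝 (0:ℝ)) (𝓝 (-1)) := by
      rw [← nhdsNE_sup_pure (0:ℝ)]
      exact h2.sup (by simpa [hfun] using tendsto_pure_nhds hfun 0)
    simpa [ContinuousAt, hfun] using this
  · have : ∀ᶠ s in 𝓝 t, Real.log (1 - s) / s = hfun s := by
      filter_upwards [eventually_ne_nhds ht0] with s hs
      simp [hfun, hs]
    refine ContinuousAt.congr ?_ this
    exact (((Real.continuousAt_log (sub_ne_zero.mpr (ne_of_gt (by linarith)))).comp
      (by fun_prop)).div continuousAt_id ht0)

lemma hfun_measurable : Measurable hfun := by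
  unfold hfun
  refine Measurable.ite (measurableSet_singleton 0) measurable_const ?_
  exact ((measurable_const.sub measurable_id).log).div measurable_id

lemma hfun_contOn {x : ℝ} (hx : x < 1) : ContinuousOn hfun (Set.uIcc 0 x) := by
  intro t ht
  have : t < 1 := by
    rcases Set.mem_uIcc.mp ht with ⟨_, h⟩ | ⟨_, h⟩ <;> linarith
  exact (hfun_contAt this).continuousWithinAt

lemma hfun_intble {x : ℝ} (hx : x < 1) : IntervalIntegrable hfun volume 0 x :=
  (hfun_contOn hx).intervalIntegrable

lemma Li2_eq (x : ℝ) : Li2 x = -∫ t in (0:ℝ)..x, hfun t := by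
  unfold Li2
  congr 1
  refine intervalIntegral.integral_congr_ae ?_
  have h0 : ∀ᵐ t : ℝ, t ≠ 0 := by
    refine (MeasureTheory.ae_iff).mpr ?_
    simpa using measure_singleton (0:ℝ)
  filter_upwards [h0] with t ht _
  simp [hfun, ht]

lemma Li2_hasDeriv {x : ℝ} (hx : x < 1) : HasDerivAt Li2 (-hfun x) x := by
  have key : HasDerivAt (fun u => ∫ t in (0:ℝ)..u, hfun t) (hfun x) x := by
    refine intervalIntegral.integral_hasDerivAt_right (hfun_intble hx)
      hfun_measurable.stronglyMeasurable.stronglyMeasurableAtFilter (hfun_contAt hx)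
  have : HasDerivAt (fun u => -∫ t in (0:ℝ)..u, hfun t) (-hfun x) x := key.neg
  exact this.congr_of_eventuallyEq (by filter_upwards with u using Li2_eq u)

lemma Li2_zero : Li2 0 = 0 := by simp [Li2]

noncomputable def rogersL (x : ℝ) : ℝ :=
  Li2 x + (1/2) * Real.log |x| * Real.log (1 - x)

noncomputable def rl' (x : ℝ) : ℝ :=
  -(1/2) * (Real.log (1 - x) / x) - (1/2) * (Real.log x / (1 - x))

lemma rogersL_hasDeriv {x : ℝ} (h0 : 0 < x) (h1 : x < 1) :
    HasDerivAt rogersL (rl' x) x := by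
  have hx0 : x ≠ 0 := ne_of_gt h0
  have hx1 : (1:ℝ) - x ≠ 0 := ne_of_gt (by linarith)
  have hlog : HasDerivAt (fun y : ℝ => Real.log |y|) x⁻¹ x := by
    refine (Real.hasDerivAt_log hx0).congr_of_eventuallyEq ?_
    filter_upwards [eventually_gt_nhds h0] with y hy
    rw [abs_of_pos hy]
  have hlog1 : HasDerivAt (fun y : ℝ => Real.log (1 - y)) (-(1-x)⁻¹) x := by
    have h1' : HasDerivAt (fun y : ℝ => 1 - y) (-1) x := by
      simpa using (hasDerivAt_id x).const_sub 1
    simpa [neg_div, div_eq_mul_inv] using h1'.log hx1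
  have hmul : HasDerivAt (fun y : ℝ => (1/2) * Real.log |y| * Real.log (1 - y))
      ((1/2) * x⁻¹ * Real.log (1 - x) + (1/2) * Real.log |x| * -(1-x)⁻¹) x := by
    simpa [Pi.mul_def, mul_assoc, mul_comm, mul_left_comm] using ((hlog.const_mul (1/2:ℝ)).mul hlog1)
  have := (Li2_hasDeriv h1).add hmul
  refine this.congr_deriv ?_
  have : hfun x = Real.log (1 - x) / x := by simp [hfun, hx0]
  rw [this, abs_of_pos h0, rl']
  field_simp
  ring

lemma const_on_Ioo {f : ℝ → ℝ} (hf : ∀ x ∈ Set.Ioo (0:ℝ) 1, HasDerivAt f 0 x) :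
    ∀ x ∈ Set.Ioo (0:ℝ) 1, ∀ y ∈ Set.Ioo (0:ℝ) 1, f x = f y := by
  have hi : interior (Set.Ioo (0:ℝ) 1) = Set.Ioo 0 1 := interior_Ioo
  have hc : ContinuousOn f (Set.Ioo 0 1) := fun x hx => (hf x hx).continuousAt.continuousWithinAt
  have hd : DifferentiableOn ℝ f (interior (Set.Ioo (0:ℝ) 1)) := by
    rw [hi]; exact fun x hx => (hf x hx).differentiableAt.differentiableWithinAt
  have hder : ∀ x ∈ interior (Set.Ioo (0:ℝ) 1), deriv f x = 0 := by
    rw [hi]; exact fun x hx => (hf x hx).deriv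
  have hmono := monotoneOn_of_deriv_nonneg (convex_Ioo 0 1) hc hd (fun x hx => le_of_eq (hder x hx).symm)
  have hanti := antitoneOn_of_deriv_nonpos (convex_Ioo 0 1) hc hd (fun x hx => le_of_eq (hder x hx))
  intro x hx y hy
  rcases le_total x y with h | h
  · exact le_antisymm (hmono hx hy h) (hanti hx hy h)
  · exact le_antisymm (hanti hy hx h) (hmono hy hx h)

lemma log_mul_log_tendsto : Tendsto (fun x : ℝ => Real.log x * Real.log (1 - x)) (𝓝[>] 0) (𝓝 0) := by
  have h1 : Tendsto (fun x : ℝ => Real.log x * x) (𝓝[>] 0) (𝓝 0) := by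
    have := tendsto_log_mul_rpow_nhdsGT_zero (r := 1) one_pos
    refine this.congr' ?_
    filter_upwards [self_mem_nhdsWithin] with x hx
    rw [Real.rpow_one]
  have h2 : Tendsto hfun (𝓝[>] (0:ℝ)) (𝓝 (-1)) := by
    have := (hfun_contAt (show (0:ℝ) < 1 by norm_num)).tendsto
    simpa [hfun] using this.mono_left nhdsWithin_le_nhds
  have := h1.mul h2
  rw [mul_neg_one, neg_zero] at this
  refine this.congr' ?_
  filter_upwards [self_mem_nhdsWithin] with x hx
  have hx0 : x ≠ 0 := ne_of_gt hx
  simp [hfun, hx0]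
  field_simp

lemma rogersL_tendsto_zero : Tendsto rogersL (𝓝[>] 0) (𝓝 0) := by
  have hL : Tendsto Li2 (𝓝[>] 0) (𝓝 0) := by
    have := (Li2_hasDeriv (show (0:ℝ) < 1 by norm_num)).continuousAt.tendsto
    rw [Li2_zero] at this
    exact this.mono_left nhdsWithin_le_nhds
  have hlog : Tendsto (fun x : ℝ => (1/2) * Real.log |x| * Real.log (1 - x)) (𝓝[>] 0) (𝓝 0) := by
    have := log_mul_log_tendsto.const_mul (1/2 : ℝ)
    rw [mul_zero] at this
    refine this.congr' ?_
    filter_upwards [self_mem_nhdsWithin] with x hx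
    rw [abs_of_pos hx]; ring
  have := hL.add hlog
  rw [add_zero] at this
  exact this

noncomputable def Ffun (y : ℝ) : ℝ := rogersL (y^2) - 2 * rogersL y + 2 * rogersL (y/(1+y))

lemma Ffun_deriv {x : ℝ} (h0 : 0 < x) (h1 : x < 1) : HasDerivAt Ffun 0 x := by
  have hx0 : x ≠ 0 := ne_of_gt h0
  have h1x : (0:ℝ) < 1 + x := by linarith
  have h1x' : (1:ℝ) + x ≠ 0 := ne_of_gt h1x
  have hsq0 : 0 < x^2 := by positivity
  have hsq1 : x^2 < 1 := by nlinarith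
  have hu0 : 0 < x/(1+x) := by positivity
  have hu1 : x/(1+x) < 1 := by rw [div_lt_one h1x]; linarith
  have hd1 : HasDerivAt (fun y : ℝ => rogersL (y^2)) (rl' (x^2) * (2*x)) x := by
    have hpow : HasDerivAt (fun y : ℝ => y^2) (2*x) x := by
      simpa using hasDerivAt_pow 2 x
    have := HasDerivAt.comp (h := fun y : ℝ => y^2) x (rogersL_hasDeriv hsq0 hsq1) hpow
    simpa [Function.comp_def] using this
  have hdu : HasDerivAt (fun y : ℝ => y/(1+y)) ((1*(1+x) - x*1)/(1+x)^2) x := by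
    exact (hasDerivAt_id x).div ((hasDerivAt_id x).const_add 1) h1x'
  have hd3 : HasDerivAt (fun y : ℝ => rogersL (y/(1+y)))
      (rl' (x/(1+x)) * ((1*(1+x) - x*1)/(1+x)^2)) x := by
    have := HasDerivAt.comp (h := fun y : ℝ => y/(1+y)) x (rogersL_hasDeriv hu0 hu1) hdu
    simpa [Function.comp_def] using this
  have hF : HasDerivAt Ffun
      (rl' (x^2) * (2*x) - 2 * rl' x + 2 * (rl' (x/(1+x)) * ((1*(1+x) - x*1)/(1+x)^2))) x :=
    ((hd1.sub ((rogersL_hasDeriv h0 h1).const_mul 2)).add (hd3.const_mul 2))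
  refine hF.congr_deriv ?_
  have e1 : Real.log (x^2) = 2 * Real.log x := by
    rw [Real.log_pow]; push_cast; ring
  have e2 : Real.log (1 - x^2) = Real.log (1-x) + Real.log (1+x) := by
    rw [show (1:ℝ) - x^2 = (1-x)*(1+x) by ring, Real.log_mul (by linarith) h1x']
  have e3 : Real.log (x/(1+x)) = Real.log x - Real.log (1+x) :=
    Real.log_div hx0 h1x'
  have e4 : Real.log (1 - x/(1+x)) = -Real.log (1+x) := by
    rw [show (1:ℝ) - x/(1+x) = (1+x)⁻¹ by field_simp; ring, Real.log_inv]
  rw [rl', rl', rl', e1, e2, e3, e4]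
  have hne1 : (1:ℝ) - x ≠ 0 := by linarith
  have hne2 : (1:ℝ) - x^2 ≠ 0 := by nlinarith
  have hne3 : (1:ℝ) - x/(1+x) ≠ 0 := by
    rw [show (1:ℝ) - x/(1+x) = (1+x)⁻¹ by field_simp; ring]; positivity
  have hune : x/(1+x) ≠ 0 := ne_of_gt hu0
  field_simp
  ring

lemma seq_tendsto : Tendsto (fun n : ℕ => 1/((n:ℝ)+2)) atTop (𝓝[>] 0) := by
  rw [tendsto_nhdsWithin_iff]
  constructor
  · have : Tendsto (fun n : ℕ => (n:ℝ)+2) atTop atTop :=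
      tendsto_natCast_atTop_atTop.atTop_add tendsto_const_nhds
    simpa [one_div, Pi.inv_def] using this.inv_tendsto_atTop
  · filter_upwards with n
    have : (0:ℝ) < (n:ℝ)+2 := by positivity
    simpa using one_div_pos.mpr this

lemma Ffun_tendsto_zero : Tendsto Ffun (𝓝[>] 0) (𝓝 0) := by
  have hsq : Tendsto (fun y : ℝ => y^2) (𝓝[>] (0:ℝ)) (𝓝[>] 0) := by
    rw [tendsto_nhdsWithin_iff]
    refine ⟨?_, ?_⟩
    · have : Tendsto (fun y : ℝ => y^2) (𝓝 0) (𝓝 0) := by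
        simpa using (continuous_pow 2).tendsto (0:ℝ)
      exact this.mono_left nhdsWithin_le_nhds
    · filter_upwards [self_mem_nhdsWithin] with y hy using Set.mem_Ioi.mpr (pow_pos hy 2)
  have hu : Tendsto (fun y : ℝ => y/(1+y)) (𝓝[>] (0:ℝ)) (𝓝[>] 0) := by
    rw [tendsto_nhdsWithin_iff]
    refine ⟨?_, ?_⟩
    · have hc : ContinuousAt (fun y : ℝ => y/(1+y)) 0 :=
        continuousAt_id.div (continuousAt_const.add continuousAt_id) (by norm_num)
      simpa using hc.tendsto.mono_left nhdsWithin_le_nhds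
    · filter_upwards [self_mem_nhdsWithin] with y hy
      have : (0:ℝ) < 1 + y := by simp at hy ⊢; linarith
      exact div_pos hy this
  have h1 := rogersL_tendsto_zero.comp hsq
  have h2 := rogersL_tendsto_zero
  have h3 := rogersL_tendsto_zero.comp hu
  have hsum := (h1.sub (h2.const_mul 2)).add (h3.const_mul 2)
  norm_num at hsum
  exact hsum

lemma Ffun_eq_zero {x : ℝ} (h0 : 0 < x) (h1 : x < 1) : Ffun x = 0 := by
  have hconst := const_on_Ioo (f := Ffun) (fun y hy => Ffun_deriv hy.1 hy.2)
  have hmem : ∀ n : ℕ, 1/((n:ℝ)+2) ∈ Set.Ioo (0:ℝ) 1 := by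
    intro n
    constructor
    · positivity
    · rw [div_lt_one (by positivity)]; have : (0:ℝ) ≤ n := Nat.cast_nonneg n; linarith
  have hcF : ∀ n : ℕ, Ffun (1/((n:ℝ)+2)) = Ffun x := fun n =>
    hconst _ (hmem n) x ⟨h0, h1⟩
  have ht : Tendsto (fun n : ℕ => Ffun (1/((n:ℝ)+2))) atTop (𝓝 0) :=
    Ffun_tendsto_zero.comp seq_tendsto
  have ht2 : Tendsto (fun _ : ℕ => Ffun x) atTop (𝓝 (Ffun x)) := tendsto_const_nhds
  have := ht.congr hcF
  exact (tendsto_nhds_unique this ht2).symm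

lemma landen {x : ℝ} (h0 : 0 < x) (h1 : x < 1) :
    rogersL (x^2) = 2 * rogersL x - 2 * rogersL (x/(1+x)) := by
  have := Ffun_eq_zero h0 h1
  unfold Ffun at this
  linarith

lemma summable_aux : Summable (fun n : ℕ => 1/((n:ℝ)+1)^2) := by
  have := Real.summable_one_div_nat_pow.mpr (le_refl 2)
  have h2 := (summable_nat_add_iff 1).mpr this
  refine h2.congr fun n => ?_
  push_cast
  ring_nf

lemma Li2_hasSum {x : ℝ} (h0 : 0 ≤ x) (h1 : x < 1) :
    HasSum (fun n : ℕ => x^(n+1)/((n:ℝ)+1)^2) (Li2 x) := by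
  rcases eq_or_lt_of_le h0 with rfl | h0'
  · simpa [Li2_zero] using hasSum_zero
  set F : ℕ → ℝ → ℝ := fun n t => t^n/((n:ℝ)+1) with hF
  set μ := volume.restrict (Set.Ioc (0:ℝ) x) with hμ
  have hFint : ∀ n : ℕ, MeasureTheory.Integrable (F n) μ := by
    intro n
    exact (Continuous.integrableOn_Ioc (by fun_prop))
  have hval : ∀ n : ℕ, ∫ t, F n t ∂μ = x^(n+1)/(((n:ℝ)+1)^2) := by
    intro n
    have h1' : ∫ t, F n t ∂μ = ∫ t in (0:ℝ)..x, F n t := by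
      rw [intervalIntegral.integral_of_le h0]
    rw [h1', hF]
    simp only []
    rw [intervalIntegral.integral_div, integral_pow]
    rw [zero_pow (by omega)]
    have hne : ((n:ℝ)+1) ≠ 0 := by positivity
    push_cast
    field_simp
    ring
  have hnorm : ∀ n : ℕ, ∫ t, ‖F n t‖ ∂μ = x^(n+1)/(((n:ℝ)+1)^2) := by
    intro n
    rw [← hval n]
    refine MeasureTheory.integral_congr_ae ?_
    refine (MeasureTheory.ae_restrict_iff' measurableSet_Ioc).mpr (Filter.Eventually.of_forall ?_)
    intro t ht
    show ‖F n t‖ = F n t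
    have ht0 : 0 < t := ht.1
    rw [Real.norm_eq_abs, abs_of_nonneg]
    show (0:ℝ) ≤ t^n/((n:ℝ)+1)
    positivity
  have hsummable : Summable (fun n : ℕ => x^(n+1)/(((n:ℝ)+1)^2)) := by
    refine Summable.of_nonneg_of_le (fun n => by positivity) (fun n => ?_) summable_aux
    have hxp : x^(n+1) ≤ 1 := pow_le_one₀ h0 h1.le
    have : (0:ℝ) < ((n:ℝ)+1)^2 := by positivity
    rw [div_le_div_iff₀ this this, one_mul]
    nlinarith
  have hswap := MeasureTheory.integral_tsum_of_summable_integral_norm hFint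
    (by simpa only [hnorm] using hsummable)
  have hptwise : ∫ t, (∑' n, F n t) ∂μ = ∫ t, (-hfun t) ∂μ := by
    refine MeasureTheory.integral_congr_ae ?_
    refine (MeasureTheory.ae_restrict_iff' measurableSet_Ioc).mpr (Filter.Eventually.of_forall ?_)
    intro t ht
    show ∑' n, F n t = -hfun t
    have ht0 : 0 < t := ht.1
    have ht1 : t < 1 := lt_of_le_of_lt ht.2 h1
    have habs : |t| < 1 := by rw [abs_of_pos ht0]; exact ht1
    have hs := Real.hasSum_pow_div_log_of_abs_lt_one habs
    have hs2 := hs.div_const t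
    have hs3 : HasSum (fun n : ℕ => F n t) (-Real.log (1 - t) / t) := by
      refine hs2.congr_fun fun n => ?_
      rw [hF]
      simp only []
      rw [pow_succ]
      field_simp
    rw [hs3.tsum_eq, hfun]
    rw [if_neg (ne_of_gt ht0)]
    ring
  have hLi2 : Li2 x = ∫ t, (-hfun t) ∂μ := by
    rw [Li2_eq, hμ, ← intervalIntegral.integral_of_le h0, ← intervalIntegral.integral_neg]
  refine (Summable.hasSum_iff hsummable).mpr ?_
  calc ∑' (n : ℕ), x^(n+1)/(((n:ℝ)+1)^2) = ∑' (n : ℕ), ∫ t, F n t ∂μ := by simp_rw [hval]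
    _ = ∫ t, (∑' n, F n t) ∂μ := hswap
    _ = Li2 x := by rw [hptwise, ← hLi2]

lemma Li2_tendsto_one : Tendsto Li2 (𝓝[<] (1:ℝ)) (𝓝 (π^2/6)) := by
  have hbasel : HasSum (fun n : ℕ => 1/(n:ℝ)^2) (π^2/6) := hasSum_zeta_two
  have habel := Real.tendsto_tsum_powerSeries_nhdsWithin_lt
    (f := fun n : ℕ => 1/(n:ℝ)^2) hbasel.tendsto_sum_nat
  refine habel.congr' ?_
  filter_upwards [Ioo_mem_nhdsLT_of_mem (by norm_num : (1:ℝ) ∈ Set.Ioc 0 1)] with x hx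
  have h0 : 0 ≤ x := le_of_lt hx.1
  have h1 : x < 1 := hx.2
  have hsum := Li2_hasSum h0 h1
  have hsum2 : HasSum (fun n : ℕ => 1/(n:ℝ)^2 * x^n) (Li2 x) := by
    rw [← hasSum_nat_add_iff' 1]
    simp only [Finset.range_one, Finset.sum_singleton]
    rw [show Li2 x - (1:ℝ)/((0:ℕ):ℝ)^2 * x^(0:ℕ) = Li2 x by norm_num]
    refine hsum.congr_fun fun n => ?_
    push_cast
    field_simp
  exact hsum2.tsum_eq

noncomputable def Gfun (x : ℝ) : ℝ := Li2 x + Li2 (1-x) + Real.log x * Real.log (1-x)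

lemma Gfun_deriv {x : ℝ} (h0 : 0 < x) (h1 : x < 1) : HasDerivAt Gfun 0 x := by
  have hx0 : x ≠ 0 := ne_of_gt h0
  have hx1 : (1:ℝ) - x ≠ 0 := ne_of_gt (by linarith)
  have hd1 : HasDerivAt Li2 (-hfun x) x := Li2_hasDeriv h1
  have hd2 : HasDerivAt (fun y : ℝ => Li2 (1-y)) (hfun (1-x)) x := by
    have hin : HasDerivAt (fun y : ℝ => 1 - y) (-1) x := by
      simpa using (hasDerivAt_id x).const_sub 1
    have := HasDerivAt.comp (h := fun y : ℝ => 1 - y) x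
      (Li2_hasDeriv (show 1 - x < 1 by linarith)) hin
    simpa [Function.comp_def] using this
  have hd3 : HasDerivAt (fun y : ℝ => Real.log y * Real.log (1-y))
      (x⁻¹ * Real.log (1-x) + Real.log x * -(1-x)⁻¹) x := by
    have hl1 : HasDerivAt Real.log x⁻¹ x := Real.hasDerivAt_log hx0
    have hl2 : HasDerivAt (fun y : ℝ => Real.log (1-y)) (-(1-x)⁻¹) x := by
      have hin : HasDerivAt (fun y : ℝ => 1 - y) (-1) x := by
        simpa using (hasDerivAt_id x).const_sub 1
      simpa [neg_div, div_eq_mul_inv] using hin.log hx1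
    exact hl1.mul hl2
  have := (hd1.add hd2).add hd3
  refine this.congr_deriv ?_
  have e1 : hfun x = Real.log (1-x) / x := by simp [hfun, hx0]
  have e2 : hfun (1-x) = Real.log x / (1-x) := by
    simp [hfun, hx1, sub_sub_cancel]
  rw [e1, e2]
  field_simp
  ring

lemma Gfun_eq {x : ℝ} (h0 : 0 < x) (h1 : x < 1) : Gfun x = π^2/6 := by
  have hconst := const_on_Ioo (f := Gfun) (fun y hy => Gfun_deriv hy.1 hy.2)
  have hmem : ∀ n : ℕ, 1/((n:ℝ)+2) ∈ Set.Ioo (0:ℝ) 1 := by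
    intro n
    refine ⟨by positivity, ?_⟩
    rw [div_lt_one (by positivity)]
    have : (0:ℝ) ≤ n := Nat.cast_nonneg n
    linarith
  have hcG : ∀ n : ℕ, Gfun (1/((n:ℝ)+2)) = Gfun x := fun n => hconst _ (hmem n) x ⟨h0, h1⟩
  -- limit of Gfun along 0+
  have hL0 : Tendsto Li2 (𝓝[>] 0) (𝓝 0) := by
    have := (Li2_hasDeriv (show (0:ℝ) < 1 by norm_num)).continuousAt.tendsto
    rw [Li2_zero] at this
    exact this.mono_left nhdsWithin_le_nhds
  have hmap : Tendsto (fun x : ℝ => 1 - x) (𝓝[>] (0:ℝ)) (𝓝[<] (1:ℝ)) := by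
    rw [tendsto_nhdsWithin_iff]
    constructor
    · have : Tendsto (fun x : ℝ => 1 - x) (𝓝 0) (𝓝 1) := by
        simpa [Pi.sub_def] using (continuous_const.sub continuous_id).tendsto (0:ℝ)
      exact this.mono_left nhdsWithin_le_nhds
    · filter_upwards [self_mem_nhdsWithin] with y hy
      simp only [Set.mem_Iio]
      have : (0:ℝ) < y := hy
      linarith
  have hL1 : Tendsto (fun x : ℝ => Li2 (1-x)) (𝓝[>] 0) (𝓝 (π^2/6)) :=
    Li2_tendsto_one.comp hmap
  have hGlim : Tendsto Gfun (𝓝[>] 0) (𝓝 (π^2/6)) := by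
    have := (hL0.add hL1).add log_mul_log_tendsto
    unfold Gfun; simpa using this
  have ht : Tendsto (fun n : ℕ => Gfun (1/((n:ℝ)+2))) atTop (𝓝 (π^2/6)) :=
    hGlim.comp seq_tendsto
  have := ht.congr hcG
  exact (tendsto_nhds_unique tendsto_const_nhds this)

lemma rogersL_half : rogersL (1/2 : ℝ) = π^2/12 := by
  have hG := Gfun_eq (show (0:ℝ) < 1/2 by norm_num) (by norm_num)
  unfold Gfun at hG
  norm_num at hG
  unfold rogersL
  rw [show |(1:ℝ)/2| = 1/2 by norm_num]
  norm_num
  linarith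

lemma rogersL_nonneg {x : ℝ} (h0 : 0 < x) (h1 : x < 1) : 0 ≤ rogersL x := by
  have hLi : 0 ≤ Li2 x := by
    rw [Li2_eq, ← intervalIntegral.integral_neg]
    refine intervalIntegral.integral_nonneg h0.le ?_
    intro t ht
    rcases eq_or_ne t 0 with rfl | ht0
    · simp [hfun]
    · have ht0' : 0 < t := lt_of_le_of_ne ht.1 (Ne.symm ht0)
      have ht1 : t < 1 := lt_of_le_of_lt ht.2 h1
      simp only [hfun, if_neg ht0]
      rw [le_neg, neg_zero]
      exact div_nonpos_of_nonpos_of_nonneg (Real.log_nonpos (by linarith) (by linarith)) ht0'.le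
  have hlog : 0 ≤ (1/2) * Real.log |x| * Real.log (1-x) := by
    rw [abs_of_pos h0]
    have hl1 : Real.log x ≤ 0 := Real.log_nonpos h0.le h1.le
    have hl2 : Real.log (1-x) ≤ 0 := Real.log_nonpos (by linarith) (by linarith)
    nlinarith
  unfold rogersL
  linarith

theorem rogersL_series :
    HasSum (fun r : ℕ => rogersL (1 / ((r : ℝ) + 2) ^ 2)) (π ^ 2 / 6) := by
  set g : ℕ → ℝ := fun n => 2 * rogersL (1/((n:ℝ)+2)) with hg
  have hmem : ∀ n : ℕ, (0:ℝ) < 1/((n:ℝ)+2) ∧ 1/((n:ℝ)+2) < 1 := by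
    intro n
    refine ⟨by positivity, ?_⟩
    rw [div_lt_one (by positivity)]
    have : (0:ℝ) ≤ n := Nat.cast_nonneg n
    linarith
  have hterm : ∀ r : ℕ, rogersL (1 / ((r : ℝ) + 2) ^ 2) = g r - g (r+1) := by
    intro r
    have h2 : (0:ℝ) < (r:ℝ)+2 := by positivity
    have h3 : (0:ℝ) < (r:ℝ)+3 := by positivity
    have hx := hmem r
    have hlan := landen hx.1 hx.2
    have e1 : (1/((r:ℝ)+2))^2 = 1 / ((r : ℝ) + 2) ^ 2 := by
      rw [div_pow, one_pow]
    have e2 : (1/((r:ℝ)+2))/(1+1/((r:ℝ)+2)) = 1/((r:ℝ)+3) := by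
      rw [div_eq_div_iff (by positivity) (ne_of_gt h3)]
      field_simp
      ring
    have e3 : ((r+1:ℕ):ℝ)+2 = (r:ℝ)+3 := by push_cast; ring
    rw [e1, e2] at hlan
    rw [hlan, hg]
    simp only [e3]
  have hnonneg : ∀ r : ℕ, 0 ≤ rogersL (1 / ((r : ℝ) + 2) ^ 2) := by
    intro r
    have h2 : (0:ℝ) < (r:ℝ)+2 := by positivity
    refine rogersL_nonneg (by positivity) ?_
    rw [div_lt_one (by positivity)]
    nlinarith [Nat.cast_nonneg (α := ℝ) r]
  have hgtend : Tendsto g atTop (𝓝 0) := by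
    have := (rogersL_tendsto_zero.comp seq_tendsto).const_mul (2:ℝ)
    simpa [hg, Function.comp] using this
  have hpartial : Tendsto (fun n : ℕ => ∑ i ∈ Finset.range n, rogersL (1 / ((i : ℝ) + 2) ^ 2))
      atTop (𝓝 (π^2/6)) := by
    have heq : ∀ n : ℕ, ∑ i ∈ Finset.range n, rogersL (1 / ((i : ℝ) + 2) ^ 2) = g 0 - g n := by
      intro n
      rw [← Finset.sum_range_sub' g n]
      exact Finset.sum_congr rfl fun i _ => hterm i
    simp_rw [heq]
    have h0 : g 0 = π^2/6 := by
      rw [hg]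
      norm_num [rogersL_half]
      ring
    have h2 := (tendsto_const_nhds (x := g 0) (f := atTop (α := ℕ))).sub hgtend
    rw [sub_zero] at h2
    rw [show (π:ℝ)^2/6 = g 0 from h0.symm]
    exact h2
  exact (hasSum_iff_tendsto_nat_of_nonneg hnonneg _).mpr hpartial
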